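/- Let A = (a_{ij}) be an n×m binary matrix belonging to 𝔡_{n×m}, let s be the number of ones in the first row of A and t the number of ones in the first column of A. Then the row value of the first row is x_1 = (2^s − 1)·2^{m−s} = 2^m − 2^{m−s} and the column value of the first column is y_1 = (2^t − 1)·2^{n−t} = 2^n − 2^{n−t}. -/

import Mathlib

/-- The integer encoded (in binary, most significant digit first) by the `i`-th row
of the binary matrix `A`, i.e. `x_i = ∑_j a_{ij} 2^{m-j}` (1-indexed). -/
def rowVal {n m : ℕ} (A : Fin n → Fin m → Fin 2) (i : Fin n) : ℕ :=
  ∑ j : Fin m, (A i j : ℕ) * 2 ^ (m - 1 - (j : ℕ))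

/-- The integer encoded by the `j`-th column of `A`, i.e. `y_j = ∑_i a_{ij} 2^{n-i}`. -/
def colVal {n m : ℕ} (A : Fin n → Fin m → Fin 2) (j : Fin m) : ℕ :=
  ∑ i : Fin n, (A i j : ℕ) * 2 ^ (n - 1 - (i : ℕ))

/-- `A ∈ 𝔠_{n×m}`: rows and columns sorted in lexicographically nondecreasing order. -/
def memC {n m : ℕ} (A : Fin n → Fin m → Fin 2) : Prop :=
  Monotone (rowVal A) ∧ Monotone (colVal A)

/-- `A ∈ 𝔡_{n×m}`: rows and columns sorted in lexicographically nonincreasing order. -/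
def memD {n m : ℕ} (A : Fin n → Fin m → Fin 2) : Prop :=
  Antitone (rowVal A) ∧ Antitone (colVal A)

/-- `Λ_n^k`: n×n binary matrices with exactly `k` ones in each row and each column. -/
def lambdaSet (n k : ℕ) : Set (Fin n → Fin n → Fin 2) :=
  {A | (∀ i, ∑ j, (A i j : ℕ) = k) ∧ (∀ j, ∑ i, (A i j : ℕ) = k)}

/-- `Γ_n^k = 𝔠_{n×n} ∩ Λ_n^k`. -/
def GammaSet (n k : ℕ) : Set (Fin n → Fin n → Fin 2) :=
  {A | memC A} ∩ lambdaSet n k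

/-- `Δ_n^k = 𝔡_{n×n} ∩ Λ_n^k`. -/
def DeltaSet (n k : ℕ) : Set (Fin n → Fin n → Fin 2) :=
  {A | memD A} ∩ lambdaSet n k

/-- `γ(n,k) = |Γ_n^k|`. -/
noncomputable def gammaCard (n k : ℕ) : ℕ := (GammaSet n k).ncard

/-- `δ(n,k) = |Δ_n^k|`. -/
noncomputable def deltaCard (n k : ℕ) : ℕ := (DeltaSet n k).ncard

lemma aux_geom (M s : ℕ) (h : s ≤ M) :
    ∑ j ∈ Finset.range s, 2 ^ (M - 1 - j) = 2 ^ M - 2 ^ (M - s) := by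
  induction s with
  | zero => simp
  | succ k ih =>
    rw [Finset.sum_range_succ, ih (by omega)]
    have h1 : 2 ^ (M - k) = 2 * 2 ^ (M - (k + 1)) := by
      rw [← pow_succ']
      congr 1
      omega
    have h2 : M - 1 - k = M - (k + 1) := by omega
    have h3 : 2 ^ (M - k) ≤ 2 ^ M := Nat.pow_le_pow_right (by norm_num) (by omega)
    rw [h2]
    omega

lemma sum_ind (M c : ℕ) : ∑ j ∈ Finset.range M, (if j < c then (1:ℕ) else 0) = min c M := by
  induction M with
  | zero => simp
  | succ k ih =>
    rw [Finset.sum_range_succ, ih]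
    split_ifs <;> omega

lemma val_of_antitone {M : ℕ} (f : Fin M → Fin 2)
    (hf : ∀ j j' : Fin M, j ≤ j' → (f j' : ℕ) ≤ (f j : ℕ))
    (s : ℕ) (hs : s = ∑ j, (f j : ℕ)) :
    ∑ j : Fin M, (f j : ℕ) * 2 ^ (M - 1 - (j : ℕ)) = 2 ^ M - 2 ^ (M - s) := by
  have hb : ∀ j : Fin M, (f j : ℕ) ≤ 1 := fun j => Nat.lt_succ_iff.mp (f j).isLt
  have hsM : s ≤ M := by
    rw [hs]
    calc ∑ j, (f j : ℕ) ≤ ∑ _j : Fin M, 1 := Finset.sum_le_sum fun j _ => hb j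
    _ = M := by simp
  have hchar : ∀ j : Fin M, (f j : ℕ) = if (j : ℕ) < s then 1 else 0 := by
    intro j
    split_ifs with hj
    · -- if f j = 0 then s ≤ j
      by_contra hne
      have hj0 : (f j : ℕ) = 0 := by omega
      have hle : ∑ j' : Fin M, (f j' : ℕ) ≤ ∑ j' : Fin M, (if (j' : ℕ) < (j : ℕ) then 1 else 0) := by
        apply Finset.sum_le_sum
        intro j' _
        split_ifs with h'
        · exact hb j'
        · have : j ≤ j' := by
            rw [Fin.le_def]; omega
          have := hf j j' this
          omega
      rw [Fin.sum_univ_eq_sum_range (fun k => if k < (j:ℕ) then (1:ℕ) else 0)] at hle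
      rw [sum_ind] at hle
      have : (j:ℕ) < M := j.isLt
      omega
    · by_contra hne
      have hj1 : (f j : ℕ) = 1 := by omega
      have hle : ∑ j' : Fin M, (if (j' : ℕ) < (j : ℕ) + 1 then 1 else 0) ≤ ∑ j' : Fin M, (f j' : ℕ) := by
        apply Finset.sum_le_sum
        intro j' _
        split_ifs with h'
        · have : j' ≤ j := by rw [Fin.le_def]; omega
          have := hf j' j this
          omega
        · exact Nat.zero_le _
      rw [Fin.sum_univ_eq_sum_range (fun k => if k < (j:ℕ)+1 then (1:ℕ) else 0)] at hle
      rw [sum_ind] at hle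
      have : (j:ℕ) < M := j.isLt
      omega
  calc ∑ j : Fin M, (f j : ℕ) * 2 ^ (M - 1 - (j : ℕ))
      = ∑ j : Fin M, (if (j:ℕ) < s then 2 ^ (M - 1 - (j : ℕ)) else 0) := by
        apply Finset.sum_congr rfl
        intro j _
        rw [hchar j]
        split_ifs <;> simp
    _ = ∑ j ∈ Finset.range M, (if j < s then 2 ^ (M - 1 - j) else 0) :=
        Fin.sum_univ_eq_sum_range (fun k => if k < s then 2 ^ (M - 1 - k) else 0) M
    _ = ∑ j ∈ Finset.range s, 2 ^ (M - 1 - j) := by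
        rw [← Finset.sum_subset (Finset.range_subset_range.mpr hsM)]
        · apply Finset.sum_congr rfl
          intro j hj
          rw [Finset.mem_range] at hj
          simp [hj]
        · intro j _ hj
          rw [Finset.mem_range] at hj
          simp [hj]
    _ = 2 ^ M - 2 ^ (M - s) := aux_geom M s hsM

lemma head_lt {M : ℕ} (f : Fin (M + 1) → Fin 2) (h : (f 0 : ℕ) = 0) :
    ∑ i : Fin (M + 1), (f i : ℕ) * 2 ^ (M + 1 - 1 - (i : ℕ)) < 2 ^ M := by
  rw [Fin.sum_univ_succ]
  simp only [Fin.val_zero, h, zero_mul, zero_add]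
  have hle : ∑ i : Fin M, (f i.succ : ℕ) * 2 ^ (M + 1 - 1 - (i.succ : ℕ))
      ≤ ∑ i : Fin M, 2 ^ (M - 1 - (i : ℕ)) := by
    apply Finset.sum_le_sum
    intro i _
    have h1 : (f i.succ : ℕ) ≤ 1 := Nat.lt_succ_iff.mp (f i.succ).isLt
    have h2 : M + 1 - 1 - (i.succ : ℕ) = M - 1 - (i : ℕ) := by
      simp [Fin.val_succ]; omega
    rw [h2]
    calc (f i.succ : ℕ) * 2 ^ (M - 1 - (i : ℕ)) ≤ 1 * 2 ^ (M - 1 - (i : ℕ)) :=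
      Nat.mul_le_mul_right _ h1
    _ = 2 ^ (M - 1 - (i : ℕ)) := one_mul _
  have := (Fin.sum_univ_eq_sum_range (fun k => 2 ^ (M - 1 - k)) M)
  rw [this, aux_geom M M le_rfl] at hle
  have hpos : 0 < 2 ^ M := Nat.pow_pos (n := M) (by norm_num)
  simp at hle ⊢
  omega

lemma head_ge {M : ℕ} (f : Fin (M + 1) → Fin 2) (h : (f 0 : ℕ) = 1) :
    2 ^ M ≤ ∑ i : Fin (M + 1), (f i : ℕ) * 2 ^ (M + 1 - 1 - (i : ℕ)) := by
  rw [Fin.sum_univ_succ]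
  simp only [Fin.val_zero, h, one_mul]
  have : M + 1 - 1 - 0 = M := by omega
  rw [this]
  exact Nat.le_add_right _ _
lemma sub_one_pow_eq (s M : ℕ) (h : s ≤ M) :
    (2 ^ s - 1) * 2 ^ (M - s) = 2 ^ M - 2 ^ (M - s) := by
  rw [Nat.sub_mul, one_mul, ← pow_add]
  congr 2
  omega

/-- Theorem: if `A ∈ 𝔡_{n×m}`, `s` is the number of ones in the first row and `t` the number
of ones in the first column, then `x_1 = (2^s - 1)·2^{m-s} = 2^m - 2^{m-s}` and
`y_1 = (2^t - 1)·2^{n-t} = 2^n - 2^{n-t}`. -/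
theorem firstRowVal_firstColVal_of_memD (n m : ℕ) (hn : 0 < n) (hm : 0 < m)
    (A : Fin n → Fin m → Fin 2) (hA : memD A) (s t : ℕ)
    (hs : s = ∑ j : Fin m, (A ⟨0, hn⟩ j : ℕ))
    (ht : t = ∑ i : Fin n, (A i ⟨0, hm⟩ : ℕ)) :
    rowVal A ⟨0, hn⟩ = (2 ^ s - 1) * 2 ^ (m - s) ∧
    rowVal A ⟨0, hn⟩ = 2 ^ m - 2 ^ (m - s) ∧
    colVal A ⟨0, hm⟩ = (2 ^ t - 1) * 2 ^ (n - t) ∧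
    colVal A ⟨0, hm⟩ = 2 ^ n - 2 ^ (n - t) := by
  obtain ⟨n', rfl⟩ : ∃ n', n = n' + 1 := ⟨n - 1, by omega⟩
  obtain ⟨m', rfl⟩ : ∃ m', m = m' + 1 := ⟨m - 1, by omega⟩
  have hrow : ∀ j j' : Fin (m' + 1), j ≤ j' → (A ⟨0, hn⟩ j' : ℕ) ≤ (A ⟨0, hn⟩ j : ℕ) := by
    intro j j' hjj'
    by_contra hc
    have h1 : (A ⟨0, hn⟩ j : ℕ) < 2 := (A ⟨0, hn⟩ j).isLt
    have h2 : (A ⟨0, hn⟩ j' : ℕ) < 2 := (A ⟨0, hn⟩ j').isLt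
    have hz : (A ⟨0, hn⟩ j : ℕ) = 0 := by omega
    have ho : (A ⟨0, hn⟩ j' : ℕ) = 1 := by omega
    have hlt : colVal A j < colVal A j' := by
      have e1 : colVal A j = ∑ i : Fin (n' + 1), ((fun i => A i j) i : ℕ) * 2 ^ (n' + 1 - 1 - (i : ℕ)) := rfl
      have e2 : colVal A j' = ∑ i : Fin (n' + 1), ((fun i => A i j') i : ℕ) * 2 ^ (n' + 1 - 1 - (i : ℕ)) := rfl
      rw [e1, e2]
      exact lt_of_lt_of_le (head_lt (fun i => A i j) hz) (head_ge (fun i => A i j') ho)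
    have := hA.2 hjj'
    omega
  have hcol : ∀ i i' : Fin (n' + 1), i ≤ i' → (A i' ⟨0, hm⟩ : ℕ) ≤ (A i ⟨0, hm⟩ : ℕ) := by
    intro i i' hii'
    by_contra hc
    have h1 : (A i ⟨0, hm⟩ : ℕ) < 2 := (A i ⟨0, hm⟩).isLt
    have h2 : (A i' ⟨0, hm⟩ : ℕ) < 2 := (A i' ⟨0, hm⟩).isLt
    have hz : (A i ⟨0, hm⟩ : ℕ) = 0 := by omega
    have ho : (A i' ⟨0, hm⟩ : ℕ) = 1 := by omega
    have hlt : rowVal A i < rowVal A i' := by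
      have e1 : rowVal A i = ∑ j : Fin (m' + 1), (A i j : ℕ) * 2 ^ (m' + 1 - 1 - (j : ℕ)) := rfl
      have e2 : rowVal A i' = ∑ j : Fin (m' + 1), (A i' j : ℕ) * 2 ^ (m' + 1 - 1 - (j : ℕ)) := rfl
      rw [e1, e2]
      exact lt_of_lt_of_le (head_lt (A i) hz) (head_ge (A i') ho)
    have := hA.1 hii'
    omega
  have hR : rowVal A ⟨0, hn⟩ = 2 ^ (m' + 1) - 2 ^ (m' + 1 - s) :=
    val_of_antitone (A ⟨0, hn⟩) hrow s hs
  have hC : colVal A ⟨0, hm⟩ = 2 ^ (n' + 1) - 2 ^ (n' + 1 - t) :=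
    val_of_antitone (fun i => A i ⟨0, hm⟩) hcol t ht
  have hsM : s ≤ m' + 1 := by
    rw [hs]
    calc ∑ j, (A ⟨0, hn⟩ j : ℕ) ≤ ∑ _j : Fin (m' + 1), 1 :=
      Finset.sum_le_sum fun j _ => Nat.lt_succ_iff.mp (A ⟨0, hn⟩ j).isLt
    _ = m' + 1 := by simp
  have htN : t ≤ n' + 1 := by
    rw [ht]
    calc ∑ i, (A i ⟨0, hm⟩ : ℕ) ≤ ∑ _i : Fin (n' + 1), 1 :=
      Finset.sum_le_sum fun i _ => Nat.lt_succ_iff.mp (A i ⟨0, hm⟩).isLt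
    _ = n' + 1 := by simp
  exact ⟨by rw [hR, sub_one_pow_eq s (m' + 1) hsM], hR,
    by rw [hC, sub_one_pow_eq t (n' + 1) htN], hC⟩
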